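/- Let s₁ > 2 and s₂ > 2. Then the double integral ∫₀^∞ ∫₀^∞ u · v · ⟨u⟩^{−s₁} · ⟨v − u⟩^{−(s₂−2)} · ⟨v⟩^{−2} du dv is finite. -/

import Mathlib

open MeasureTheory Real

/-- Integrability of the Japanese bracket power on `Ioi 0` for exponent `> 1`. -/
lemma aux_integrableOn {r : ℝ} (hr : 1 < r) :
    IntegrableOn (fun x : ℝ => (1 + x ^ 2) ^ (-r / 2)) (Set.Ioi 0) := by
  have h : Integrable (fun x : ℝ => ((1 : ℝ) + ‖x‖ ^ 2) ^ (-r / 2)) := by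
    apply integrable_rpow_neg_one_add_norm_sq
    simpa using hr
  have h' : Integrable (fun x : ℝ => (1 + x ^ 2) ^ (-r / 2)) := by
    simpa [Real.norm_eq_abs, sq_abs] using h
  exact h'.integrableOn

lemma aux_lintegral_lt_top {r : ℝ} (hr : 1 < r) :
    (∫⁻ x in Set.Ioi (0 : ℝ), ENNReal.ofReal ((1 + x ^ 2) ^ (-r / 2))) < ⊤ :=
  (aux_integrableOn hr).setLIntegral_lt_top

/-- The pointwise bound. -/
lemma aux_pointwise {s₁ s₂ δ : ℝ} (h₁ : 2 < s₁) (hδ0 : 0 < δ) (hδb : δ ≤ s₂ - 2)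
    {u v : ℝ} (hu : 0 < u) (hv : 0 < v) :
    u * v * (1 + u ^ 2) ^ (-s₁ / 2) * (1 + (v - u) ^ 2) ^ (-(s₂ - 2) / 2) * (1 + v ^ 2)⁻¹
      ≤ (2 : ℝ) ^ (δ / 2) *
        ((1 + u ^ 2) ^ (-(s₁ - 1 - δ) / 2) * (1 + v ^ 2) ^ (-(1 + δ) / 2)) := by
  have hU : (0:ℝ) < 1 + u ^ 2 := by positivity
  have hV : (0:ℝ) < 1 + v ^ 2 := by positivity
  have hW : (0:ℝ) < 1 + (v - u) ^ 2 := by positivity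
  -- u ≤ (1+u²)^(1/2)
  have hu2 : u ≤ (1 + u ^ 2) ^ ((1:ℝ)/2) := by
    rw [← Real.sqrt_eq_rpow]
    have := Real.sqrt_le_sqrt (show u ^ 2 ≤ 1 + u ^ 2 by linarith)
    rwa [Real.sqrt_sq hu.le] at this
  have hv2 : v ≤ (1 + v ^ 2) ^ ((1:ℝ)/2) := by
    rw [← Real.sqrt_eq_rpow]
    have := Real.sqrt_le_sqrt (show v ^ 2 ≤ 1 + v ^ 2 by linarith)
    rwa [Real.sqrt_sq hv.le] at this
  -- Peetre: (1+(v-u)²)^(-(s₂-2)/2) ≤ 2^(δ/2) (1+u²)^(δ/2) (1+v²)^(-δ/2)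
  have peetre : (1 + (v - u) ^ 2) ^ (-(s₂ - 2) / 2)
      ≤ (2:ℝ) ^ (δ/2) * (1 + u ^ 2) ^ (δ/2) * (1 + v ^ 2) ^ (-δ/2) := by
    have h1 : (1 + (v - u) ^ 2) ^ (-(s₂ - 2) / 2) ≤ (1 + (v - u) ^ 2) ^ (-δ / 2) := by
      apply Real.rpow_le_rpow_of_exponent_le (by nlinarith)
      linarith
    have hineq : 1 + v ^ 2 ≤ 2 * (1 + u ^ 2) * (1 + (v - u) ^ 2) := by
      nlinarith [sq_nonneg (u - (v - u)), sq_nonneg (u * (v - u))]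
    have h2 : (1 + v ^ 2) ^ (δ/2) ≤ ((2:ℝ) * (1 + u ^ 2) * (1 + (v - u) ^ 2)) ^ (δ/2) :=
      Real.rpow_le_rpow hV.le hineq (by positivity)
    have h3 : ((2:ℝ) * (1 + u ^ 2) * (1 + (v - u) ^ 2)) ^ (δ/2)
        = (2:ℝ) ^ (δ/2) * (1 + u ^ 2) ^ (δ/2) * (1 + (v - u) ^ 2) ^ (δ/2) := by
      rw [Real.mul_rpow (by positivity) hW.le, Real.mul_rpow (by norm_num) hU.le]
    have h4 : (1 + (v - u) ^ 2) ^ (-δ / 2)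
        ≤ (2:ℝ) ^ (δ/2) * (1 + u ^ 2) ^ (δ/2) * (1 + v ^ 2) ^ (-δ/2) := by
      have ha : (0:ℝ) < (1 + (v - u) ^ 2) ^ (δ/2) := by positivity
      have hb : (0:ℝ) < (1 + v ^ 2) ^ (δ/2) := by positivity
      have hKb : (1 + v ^ 2) ^ (δ/2)
          ≤ (2:ℝ) ^ (δ/2) * (1 + u ^ 2) ^ (δ/2) * (1 + (v - u) ^ 2) ^ (δ/2) := h3 ▸ h2
      rw [neg_div, Real.rpow_neg hW.le, Real.rpow_neg hV.le,
        ← div_eq_mul_inv, inv_eq_one_div, div_le_div_iff₀ ha hb, one_mul]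
      linarith
    exact h1.trans h4
  -- combine
  have key : u * v * (1 + u ^ 2) ^ (-s₁ / 2) * (1 + (v - u) ^ 2) ^ (-(s₂ - 2) / 2)
      * (1 + v ^ 2)⁻¹
      ≤ ((1 + u ^ 2) ^ ((1:ℝ)/2) * (1 + v ^ 2) ^ ((1:ℝ)/2) * (1 + u ^ 2) ^ (-s₁ / 2))
        * ((2:ℝ) ^ (δ/2) * (1 + u ^ 2) ^ (δ/2) * (1 + v ^ 2) ^ (-δ/2)) * (1 + v ^ 2)⁻¹ := by
    apply mul_le_mul_of_nonneg_right _ (by positivity)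
    apply mul_le_mul _ peetre (by positivity) (by positivity)
    apply mul_le_mul_of_nonneg_right _ (by positivity)
    exact mul_le_mul hu2 hv2 hv.le (by positivity)
  refine key.trans (le_of_eq ?_)
  have e1 : (1 + u ^ 2) ^ ((1:ℝ)/2) * (1 + u ^ 2) ^ (-s₁/2) * (1 + u ^ 2) ^ (δ/2)
      = (1 + u ^ 2) ^ (-(s₁ - 1 - δ)/2) := by
    rw [← Real.rpow_add hU, ← Real.rpow_add hU]; congr 1; ring
  have e2 : (1 + v ^ 2) ^ ((1:ℝ)/2) * (1 + v ^ 2) ^ (-δ/2) * (1 + v ^ 2) ^ (-(1:ℝ))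
      = (1 + v ^ 2) ^ (-(1 + δ)/2) := by
    rw [← Real.rpow_add hV, ← Real.rpow_add hV]; congr 1; ring
  rw [show (1 + v ^ 2)⁻¹ = (1 + v ^ 2) ^ (-(1:ℝ)) from (Real.rpow_neg_one _).symm]
  calc (1 + u ^ 2) ^ ((1:ℝ)/2) * (1 + v ^ 2) ^ ((1:ℝ)/2) * (1 + u ^ 2) ^ (-s₁ / 2)
        * ((2:ℝ) ^ (δ/2) * (1 + u ^ 2) ^ (δ/2) * (1 + v ^ 2) ^ (-δ/2))
        * (1 + v ^ 2) ^ (-(1:ℝ))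
      = ((1 + u ^ 2) ^ ((1:ℝ)/2) * (1 + u ^ 2) ^ (-s₁/2) * (1 + u ^ 2) ^ (δ/2))
        * ((1 + v ^ 2) ^ ((1:ℝ)/2) * (1 + v ^ 2) ^ (-δ/2) * (1 + v ^ 2) ^ (-(1:ℝ)))
        * (2:ℝ) ^ (δ/2) := by ring
    _ = (1 + u ^ 2) ^ (-(s₁ - 1 - δ)/2) * (1 + v ^ 2) ^ (-(1 + δ)/2) * (2:ℝ) ^ (δ/2) := by
        rw [e1, e2]
    _ = (2:ℝ) ^ (δ / 2) *
        ((1 + u ^ 2) ^ (-(s₁ - 1 - δ) / 2) * (1 + v ^ 2) ^ (-(1 + δ) / 2)) := by ring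

/-- Let `s₁ > 2` and `s₂ > 2`. Then the double integral
`∫₀^∞ ∫₀^∞ u · v · ⟨u⟩^{-s₁} · ⟨v-u⟩^{-(s₂-2)} · ⟨v⟩^{-2} du dv` is finite,
where `⟨x⟩ = (1 + x²)^{1/2}`. -/
theorem stmt_2 (s₁ s₂ : ℝ) (h₁ : 2 < s₁) (h₂ : 2 < s₂) :
    (∫⁻ v in Set.Ioi (0 : ℝ), ∫⁻ u in Set.Ioi (0 : ℝ),
        ENNReal.ofReal (u * v * (1 + u ^ 2) ^ (-s₁ / 2) *
          (1 + (v - u) ^ 2) ^ (-(s₂ - 2) / 2) * (1 + v ^ 2)⁻¹))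
      < ⊤ := by
  set δ : ℝ := min (s₁ - 2) (s₂ - 2) / 2 with hδdef
  have hδ0 : 0 < δ := by
    have : 0 < min (s₁ - 2) (s₂ - 2) := lt_min (by linarith) (by linarith)
    positivity
  have hδa : δ < s₁ - 2 := by
    have h := min_le_left (s₁ - 2) (s₂ - 2)
    have : δ ≤ (s₁ - 2) / 2 := by rw [hδdef]; linarith
    linarith
  have hδb : δ ≤ s₂ - 2 := by
    have h := min_le_right (s₁ - 2) (s₂ - 2)
    rw [hδdef]; linarith
  set C : ENNReal := ENNReal.ofReal ((2:ℝ) ^ (δ/2)) with hC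
  have hgmeas : Measurable fun u : ℝ => ENNReal.ofReal ((1 + u ^ 2) ^ (-(s₁ - 1 - δ) / 2)) := by
    fun_prop
  -- bound the iterated integral
  have hb : (∫⁻ v in Set.Ioi (0 : ℝ), ∫⁻ u in Set.Ioi (0 : ℝ),
        ENNReal.ofReal (u * v * (1 + u ^ 2) ^ (-s₁ / 2) *
          (1 + (v - u) ^ 2) ^ (-(s₂ - 2) / 2) * (1 + v ^ 2)⁻¹))
      ≤ ∫⁻ v in Set.Ioi (0 : ℝ), ∫⁻ u in Set.Ioi (0 : ℝ),
        (C * ENNReal.ofReal ((1 + v ^ 2) ^ (-(1 + δ) / 2))) *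
          ENNReal.ofReal ((1 + u ^ 2) ^ (-(s₁ - 1 - δ) / 2)) := by
    apply setLIntegral_mono' measurableSet_Ioi
    intro v hv
    apply setLIntegral_mono' measurableSet_Ioi
    intro u hu
    have hp := aux_pointwise h₁ hδ0 hδb (Set.mem_Ioi.mp hu) (Set.mem_Ioi.mp hv)
    calc ENNReal.ofReal (u * v * (1 + u ^ 2) ^ (-s₁ / 2) *
          (1 + (v - u) ^ 2) ^ (-(s₂ - 2) / 2) * (1 + v ^ 2)⁻¹)
        ≤ ENNReal.ofReal ((2:ℝ) ^ (δ/2) *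
            ((1 + u ^ 2) ^ (-(s₁ - 1 - δ) / 2) * (1 + v ^ 2) ^ (-(1 + δ) / 2))) :=
          ENNReal.ofReal_le_ofReal hp
      _ = (C * ENNReal.ofReal ((1 + v ^ 2) ^ (-(1 + δ) / 2))) *
            ENNReal.ofReal ((1 + u ^ 2) ^ (-(s₁ - 1 - δ) / 2)) := by
          rw [hC, ← ENNReal.ofReal_mul (by positivity), ← ENNReal.ofReal_mul (by positivity)]
          ring_nf
  refine lt_of_le_of_lt hb ?_
  have hA : (∫⁻ u in Set.Ioi (0 : ℝ), ENNReal.ofReal ((1 + u ^ 2) ^ (-(s₁ - 1 - δ) / 2))) < ⊤ :=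
    aux_lintegral_lt_top (by linarith)
  have hB : (∫⁻ v in Set.Ioi (0 : ℝ), ENNReal.ofReal ((1 + v ^ 2) ^ (-(1 + δ) / 2))) < ⊤ :=
    aux_lintegral_lt_top (by linarith)
  calc (∫⁻ v in Set.Ioi (0 : ℝ), ∫⁻ u in Set.Ioi (0 : ℝ),
        (C * ENNReal.ofReal ((1 + v ^ 2) ^ (-(1 + δ) / 2))) *
          ENNReal.ofReal ((1 + u ^ 2) ^ (-(s₁ - 1 - δ) / 2)))
      = ∫⁻ v in Set.Ioi (0 : ℝ),
          (C * ENNReal.ofReal ((1 + v ^ 2) ^ (-(1 + δ) / 2))) *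
            ∫⁻ u in Set.Ioi (0 : ℝ), ENNReal.ofReal ((1 + u ^ 2) ^ (-(s₁ - 1 - δ) / 2)) := by
        refine setLIntegral_congr_fun measurableSet_Ioi ?_
        intro v _
        exact lintegral_const_mul _ hgmeas
    _ = C * (∫⁻ v in Set.Ioi (0 : ℝ), ENNReal.ofReal ((1 + v ^ 2) ^ (-(1 + δ) / 2))) *
          ∫⁻ u in Set.Ioi (0 : ℝ), ENNReal.ofReal ((1 + u ^ 2) ^ (-(s₁ - 1 - δ) / 2)) := by
        rw [lintegral_mul_const' _ _ hA.ne, lintegral_const_mul' _ _ (by simp [hC])]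
    _ < ⊤ := by
        apply ENNReal.mul_lt_top (ENNReal.mul_lt_top _ hB) hA
        simp [hC]
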